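/- Let h be convex on [1, M+a] with M ≥ 3 an integer and a ∈ [0,1], and suppose max_{x∈{1,...,M}} h(x) - min_{x∈{1,...,M}} h(x) ≤ (M/20)·ε. Then min_{x∈[1,M]} h(x) - min_{x∈[1,M+a]} h(x) ≤ ε/10. -/

import Mathlib

/-- Three-point convexity inequality. -/
lemma conv3 {s : Set ℝ} {h : ℝ → ℝ} (hconv : ConvexOn ℝ s h)
    {u v w : ℝ} (hu : u ∈ s) (hw : w ∈ s) (huv : u ≤ v) (hvw : v ≤ w)
    (huw : u < w) :
    (w - u) * h v ≤ (w - v) * h u + (v - u) * h w := by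
  have hwu : 0 < w - u := by linarith
  set t : ℝ := (w - v) / (w - u) with ht
  have ht0 : 0 ≤ t := div_nonneg (by linarith) (by linarith)
  have ht1 : t ≤ 1 := by
    rw [div_le_one hwu]; linarith
  have hsum : t + (1 - t) = 1 := by ring
  have hkey := hconv.2 hu hw ht0 (by linarith) hsum
  have hv : t • u + (1 - t) • w = v := by
    rw [ht, smul_eq_mul, smul_eq_mul]; field_simp [hwu.ne']
    ring
  rw [hv] at hkey
  have h1 : (w - u) * t = w - v := by rw [ht]; field_simp [hwu.ne']
  have h2 : (w - u) * (1 - t) = v - u := by rw [mul_sub, mul_one, h1]; ring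
  rw [smul_eq_mul, smul_eq_mul] at hkey
  have hk := mul_le_mul_of_nonneg_left hkey (le_of_lt hwu)
  calc (w - u) * h v ≤ (w - u) * (t * h u + (1 - t) * h w) := hk
    _ = ((w - u) * t) * h u + ((w - u) * (1 - t)) * h w := by ring
    _ = (w - v) * h u + (v - u) * h w := by rw [h1, h2]

/-- If h is convex on [1, M+a] with integer M ≥ 3, a ∈ [0,1], and the
spread of h over the integers {1,...,M} is at most (M/20)·ε, then
min_{[1,M]} h - min_{[1,M+a]} h ≤ ε/10. -/
theorem stmt_5 (M : ℕ) (hM : 3 ≤ M) (a : ℝ) (ha0 : 0 ≤ a) (ha1 : a ≤ 1)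
    (ε : ℝ) (hε : 0 < ε) (h : ℝ → ℝ)
    (hconv : ConvexOn ℝ (Set.Icc (1 : ℝ) ((M : ℝ) + a)) h)
    (hgap : ∀ x ∈ Finset.Icc 1 M, ∀ y ∈ Finset.Icc 1 M,
      h (x : ℝ) - h (y : ℝ) ≤ (M : ℝ) / 20 * ε) :
    sInf (h '' Set.Icc (1 : ℝ) (M : ℝ)) - sInf (h '' Set.Icc (1 : ℝ) ((M : ℝ) + a)) ≤ ε / 10 := by
  have hM3 : (3 : ℝ) ≤ (M : ℝ) := by exact_mod_cast hM
  set s : Set ℝ := Set.Icc (1 : ℝ) ((M : ℝ) + a) with hs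
  have h1s : (1 : ℝ) ∈ s := ⟨le_refl 1, by linarith⟩
  have h2s : (2 : ℝ) ∈ s := ⟨by norm_num, by linarith⟩
  have h3s : (3 : ℝ) ∈ s := ⟨by norm_num, by linarith⟩
  have hMs : (M : ℝ) ∈ s := ⟨by linarith, by linarith⟩
  -- lower bound on h over s
  set L : ℝ := -(((M : ℝ) + a) * (|h 1| + |h 2| + |h 3|)) with hL
  have hlb : ∀ x ∈ s, L ≤ h x := by
    intro x hx
    obtain ⟨hx1, hx2⟩ := hx
    have habs : (0:ℝ) ≤ |h 1| + |h 2| + |h 3| := by positivity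
    rcases le_or_gt x 2 with hc | hc
    · -- 2 between x and 3
      have key := conv3 hconv (u := x) (v := 2) (w := 3) ⟨hx1, by linarith⟩ h3s hc (by norm_num) (by linarith)
      -- (3 - x) * h 2 ≤ (3 - 2) * h x + (2 - x) * h 3
      have a1 : -(|h 2|) ≤ h 2 := neg_abs_le _
      have a2 : h 3 ≤ |h 3| := le_abs_self _
      nlinarith [abs_nonneg (h 1), abs_nonneg (h 2), abs_nonneg (h 3)]
    · -- 2 between 1 and x
      have key := conv3 hconv (u := 1) (v := 2) (w := x) h1s ⟨hx1, hx2⟩ (by norm_num) (by linarith) (by linarith)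
      -- (x - 1) * h 2 ≤ (x - 2) * h 1 + (2 - 1) * h x
      have a1 : -(|h 2|) ≤ h 2 := neg_abs_le _
      have a2 : h 1 ≤ |h 1| := le_abs_self _
      nlinarith [abs_nonneg (h 1), abs_nonneg (h 2), abs_nonneg (h 3)]
  have hsub : Set.Icc (1:ℝ) (M:ℝ) ⊆ s := Set.Icc_subset_Icc le_rfl (by linarith)
  have hbdd2 : BddBelow (h '' s) := by
    refine ⟨L, ?_⟩
    rintro z ⟨x, hx, rfl⟩
    exact hlb x hx
  have hbdd1 : BddBelow (h '' Set.Icc (1:ℝ) (M:ℝ)) :=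
    hbdd2.mono (Set.image_mono hsub)
  have hne1 : (h '' Set.Icc (1:ℝ) (M:ℝ)).Nonempty :=
    ⟨h 1, 1, ⟨le_refl 1, by linarith⟩, rfl⟩
  have hne2 : (h '' s).Nonempty := ⟨h 1, 1, h1s, rfl⟩
  set A := sInf (h '' Set.Icc (1:ℝ) (M:ℝ)) with hA
  have hAle : ∀ y ∈ Set.Icc (1:ℝ) (M:ℝ), A ≤ h y := fun y hy =>
    csInf_le hbdd1 ⟨y, hy, rfl⟩
  -- gap bound h 1 - h M ≤ M/20 * ε
  have hgap1M : h 1 - h (M : ℝ) ≤ (M : ℝ) / 20 * ε := by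
    have := hgap 1 (Finset.mem_Icc.mpr ⟨le_refl 1, by omega⟩)
      M (Finset.mem_Icc.mpr ⟨by omega, le_refl M⟩)
    simpa using this
  -- key: A - ε/10 is a lower bound on h over s
  have hkey : ∀ x ∈ s, A - ε / 10 ≤ h x := by
    intro x hx
    obtain ⟨hx1, hx2⟩ := hx
    rcases le_or_gt x (M : ℝ) with hc | hc
    · have := hAle x ⟨hx1, hc⟩
      linarith
    · have key := conv3 hconv (u := 1) (v := (M : ℝ)) (w := x) h1s ⟨hx1, hx2⟩
        (by linarith) (le_of_lt hc) (by linarith)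
      -- (x - 1) * h M ≤ (x - M) * h 1 + (M - 1) * h x
      have hxM1 : x - (M : ℝ) ≤ 1 := by linarith
      have hxM0 : 0 ≤ x - (M : ℝ) := le_of_lt (by linarith)
      -- (M-1)*(h M - h x) ≤ (x-M)*(h 1 - h M) ≤ M/20 * ε ≤ (M-1)*ε/10
      have step : h (M : ℝ) - h x ≤ ε / 10 := by
        have e1 : (x - (M : ℝ)) * (h 1 - h (M : ℝ)) ≤ (M : ℝ) / 20 * ε := by
          rcases le_or_gt (h 1 - h (M : ℝ)) 0 with hh | hh
          · have := mul_nonpos_of_nonneg_of_nonpos hxM0 hh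
            nlinarith
          · nlinarith [mul_le_mul_of_nonneg_right hxM1 hh.le]
        have e2 : (M : ℝ) / 20 * ε ≤ ((M : ℝ) - 1) * (ε / 10) := by nlinarith
        have hM1 : (0 : ℝ) < (M : ℝ) - 1 := by linarith
        have e3 : ((M : ℝ) - 1) * (h (M : ℝ) - h x) ≤ ((M : ℝ) - 1) * (ε / 10) := by
          nlinarith [key, e1, e2]
        nlinarith [e3]
      have := hAle (M : ℝ) ⟨by linarith, le_refl _⟩
      linarith
  have hfinal : A - ε / 10 ≤ sInf (h '' s) := by
    apply le_csInf hne2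
    rintro z ⟨x, hx, rfl⟩
    exact hkey x hx
  linarith
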